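/- In the loop L = ℤ × ℤ with product (p,q)·(p',q') = (p+p', q+q'+C(p,2)·C(p',2)), every triple commutator of left translations by elements of the form (s,0) lies in the centre of the left multiplication group; explicitly, [L_{(s,0)}, [L_{(p,0)}, L_{(r,0)}]](a,b) = (a, b − p·r·s·(p−r)/2) for all integers a,b,p,r,s, a value independent of a. -/

import Mathlib

/-- C(p,2) = p(p-1)/2 for an arbitrary integer p. -/
def c2 (p : ℤ) : ℤ := p * (p - 1) / 2

/-- Left translation L_c by c in the loop L = ℤ × ℤ with product
(p,q)·(p',q') = (p+p', q+q'+C(p,2)·C(p',2)), as a permutation of L. -/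
def Ltrans (c : ℤ × ℤ) : Equiv.Perm (ℤ × ℤ) where
  toFun x := (c.1 + x.1, c.2 + x.2 + c2 c.1 * c2 x.1)
  invFun y := (y.1 - c.1, y.2 - c.2 - c2 c.1 * c2 (y.1 - c.1))
  left_inv x := by
    refine Prod.ext (by dsimp; ring) ?_
    dsimp
    rw [add_sub_cancel_left]
    ring
  right_inv y := by
    refine Prod.ext (by dsimp; ring) ?_
    dsimp
    ring

/-- The commutator F⁻¹ ∘ G⁻¹ ∘ F ∘ G of two permutations. -/
def pcomm (F G : Equiv.Perm (ℤ × ℤ)) : Equiv.Perm (ℤ × ℤ) := F⁻¹ * G⁻¹ * F * G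


lemma two_c2 (p : ℤ) : 2 * c2 p = p * (p - 1) := by
  have h : Even (p * (p - 1)) := by
    have h2 : p * (p - 1) = (p - 1) * ((p - 1) + 1) := by ring
    rw [h2]; exact Int.even_mul_succ_self _
  exact Int.two_mul_ediv_two_of_even h

lemma c2_add (p a : ℤ) : c2 (p + a) = c2 p + c2 a + p * a := by
  apply mul_left_cancel₀ (by norm_num : (2:ℤ) ≠ 0)
  rw [two_c2]
  linear_combination (-1) * two_c2 p + (-1) * two_c2 a

lemma Ltrans_apply (c x : ℤ × ℤ) :
    Ltrans c x = (c.1 + x.1, c.2 + x.2 + c2 c.1 * c2 x.1) := rfl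

lemma Ltrans_inv_apply (c y : ℤ × ℤ) :
    (Ltrans c)⁻¹ y = (y.1 - c.1, y.2 - c.2 - c2 c.1 * c2 (y.1 - c.1)) := rfl

def shiftP (t : ℤ) : Equiv.Perm (ℤ × ℤ) where
  toFun x := (x.1, x.2 + t)
  invFun x := (x.1, x.2 - t)
  left_inv x := by simp
  right_inv x := by simp

lemma inner_eq (p r : ℤ) :
    ∀ x : ℤ × ℤ, pcomm (Ltrans (p, 0)) (Ltrans (r, 0)) x
      = (x.1, x.2 + x.1 * (r * c2 p - p * c2 r)) := by
  intro x
  simp only [pcomm, Equiv.Perm.mul_apply, Ltrans_apply, Ltrans_inv_apply]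
  refine Prod.ext (by dsimp; ring) ?_
  dsimp
  rw [show p + (r + x.1) - r = p + x.1 by ring,
      show p + x.1 - p = x.1 by ring]
  rw [c2_add r x.1, c2_add p x.1]
  ring

lemma triple_eq (s p r : ℤ) :
    pcomm (Ltrans (s, 0)) (pcomm (Ltrans (p, 0)) (Ltrans (r, 0)))
      = shiftP (-(s * (r * c2 p - p * c2 r))) := by
  set K := pcomm (Ltrans (p, 0)) (Ltrans (r, 0)) with hK
  have hKapp := inner_eq p r
  have hKinv : ∀ x : ℤ × ℤ, K⁻¹ x = (x.1, x.2 - x.1 * (r * c2 p - p * c2 r)) := by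
    intro x
    apply K.injective
    rw [Equiv.Perm.inv_def, Equiv.apply_symm_apply, hKapp]
    exact Prod.ext rfl (by dsimp; ring)
  apply Equiv.ext
  intro x
  simp only [pcomm, Equiv.Perm.mul_apply]
  rw [hKapp, Ltrans_apply]
  dsimp
  rw [← Equiv.Perm.inv_def K, hKinv]
  dsimp
  rw [← Equiv.Perm.inv_def, Ltrans_inv_apply]
  simp only [shiftP, Equiv.coe_fn_mk]
  refine Prod.ext (by dsimp; ring) ?_
  dsimp
  ring

lemma shiftP_comm (t : ℤ) (c : ℤ × ℤ) : Commute (shiftP t) (Ltrans c) := by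
  apply Equiv.ext
  intro x
  simp only [Equiv.Perm.mul_apply, Ltrans_apply]
  simp only [shiftP, Equiv.coe_fn_mk, Ltrans_apply]
  refine Prod.ext rfl (by dsimp; ring)

/-- The triple commutator [L_{(s,0)}, [L_{(p,0)}, L_{(r,0)}]] sends (a,b) to
(a, b − p·r·s·(p−r)/2) (independently of a), and it lies in the centre of the
left multiplication group LMlt(L). -/
theorem stmt4 (s p r : ℤ) :
    (∀ a b : ℤ,
      pcomm (Ltrans (s, 0)) (pcomm (Ltrans (p, 0)) (Ltrans (r, 0))) (a, b) =
        (a, b - p * r * s * (p - r) / 2)) ∧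
    (∀ G ∈ Subgroup.closure (Set.range Ltrans),
      pcomm (pcomm (Ltrans (s, 0)) (pcomm (Ltrans (p, 0)) (Ltrans (r, 0)))) G = 1) := by
  have hdiv : p * r * s * (p - r) / 2 = s * (r * c2 p - p * c2 r) := by
    have h : p * r * s * (p - r) = 2 * (s * (r * c2 p - p * c2 r)) := by
      linear_combination (s * p) * two_c2 r - (s * r) * two_c2 p
    rw [h, Int.mul_ediv_cancel_left _ (by norm_num)]
  constructor
  · intro a b
    rw [triple_eq]
    simp only [shiftP, Equiv.coe_fn_mk]
    refine Prod.ext rfl ?_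
    dsimp
    rw [hdiv]; ring
  · intro G hG
    rw [triple_eq]
    have hc : Commute (shiftP (-(s * (r * c2 p - p * c2 r)))) G := by
      induction hG using Subgroup.closure_induction with
      | mem g hg => obtain ⟨c, rfl⟩ := hg; exact shiftP_comm _ c
      | one => exact Commute.one_right _
      | mul g h _ _ hg hh => exact hg.mul_right hh
      | inv g _ hg => exact hg.inv_right
    simp only [pcomm]
    rw [hc.inv_inv.eq]
    group
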